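/- arXiv:math/0511696 — 5 statements merged into one kernel-verified Lean document; each statement's English description precedes it below -/
import Mathlib

section
/- Let G be a group, I a type, and g a function assigning to each triple (i,j,k) ∈ I × I × I an element g_{ijk} ∈ G, with g_{iij} = 1 and g_{ijj} = 1 for all i,j ∈ I. Consider the product on I × I × G given by (i,j,a) · (j,k,b) := (i,k, g_{ijk} · a · b). Then this product is associative for all composable triples if and only if every g_{ijk} lies in the center Z(G) of G and g satisfies the abelian Čech 2-cocycle identity g_{ijl} · g_{jkl} = g_{ikl} · g_{ijk} for all i,j,k,l ∈ I. -/
theorem stmt_1 {G : Type*} [Group G] {I : Type*}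
    (g : I → I → I → G) (hg₁ : ∀ i j, g i i j = 1) (hg₂ : ∀ i j, g i j j = 1) :
    (∀ (i j k l : I) (a b c : G),
        g i k l * (g i j k * a * b) * c = g i j l * a * (g j k l * b * c)) ↔
      ((∀ i j k : I, g i j k ∈ Subgroup.center G) ∧
       (∀ i j k l : I, g i j l * g j k l = g i k l * g i j k)) := by
  constructor
  · intro h
    have hc : ∀ i k l : I, g i k l ∈ Subgroup.center G := by
      intro i k l
      rw [Subgroup.mem_center_iff]
      intro a
      have := h i i k l a 1 1
      simpa [hg₁, mul_assoc] using this.symm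
    refine ⟨hc, fun i j k l => ?_⟩
    have := h i j k l 1 1 1
    simpa [mul_assoc] using this.symm
  · rintro ⟨hc, hco⟩ i j k l a b c
    have h1 := (Subgroup.mem_center_iff.mp (hc i j k)) (g i k l)
    have h2 := (Subgroup.mem_center_iff.mp (hc j k l)) a
    calc g i k l * (g i j k * a * b) * c
        = (g i k l * g i j k) * (a * b * c) := by group
      _ = (g i j l * g j k l) * (a * b * c) := by rw [← hco]
      _ = g i j l * (g j k l * a) * (b * c) := by group
      _ = g i j l * (a * g j k l) * (b * c) := by rw [h2]
      _ = g i j l * a * (g j k l * b * c) := by group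
end

section
/- Let G be a group and I a type. Let g and g' be two functions assigning to each triple (i,j,k) ∈ I × I × I elements g_{ijk}, g'_{ijk} of the center Z(G), each normalized by g_{iij} = g_{ijj} = 1 (respectively g'_{iij} = g'_{ijj} = 1) and each satisfying the cocycle identity g_{ijl} · g_{jkl} = g_{ikl} · g_{ijk} (respectively for g'). Equip I × I × G with the two products (i,j,a) ·_g (j,k,b) := (i,k, g_{ijk} a b) and (i,j,a) ·_{g'} (j,k,b) := (i,k, g'_{ijk} a b). Then the following are equivalent: (1) there exists a family of bijections ψ_{ij} : G → G with ψ_{ii} = id_G for all i such that the map Φ(i,j,a) := (i,j, ψ_{ij}(a)) intertwines the two products, i.e. Φ((i,j,a) ·_g (j,k,b)) = Φ(i,j,a) ·_{g'} Φ(j,k,b) for all composable pairs; (2) there exists a function h assigning to each pair (i,j) an element h_{ij} ∈ Z(G), with h_{ii} = 1 for all i, such that g_{ijk} · (g'_{ijk})^{-1} = h_{ij} · h_{jk} · h_{ik}^{-1} for all i,j,k ∈ I. In particular, the product ·_g is isomorphic in this sense to the trivial product (i,j,a)(j,k,b) = (i,k, ab) if and only if (g_{ijk}) is a Z(G)-valued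 Čech 2-coboundary. -/
theorem cech_aux {G : Type*} [Group G] {I : Type*}
    (g g' : I → I → I → G)
    (hg'Z : ∀ i j k : I, g' i j k ∈ Subgroup.center G)
    (hg₁ : ∀ i j : I, g i i j = 1) (hg₂ : ∀ i j : I, g i j j = 1)
    (hg'₁ : ∀ i j : I, g' i i j = 1) (hg'₂ : ∀ i j : I, g' i j j = 1) :
    (∃ ψ : I → I → G ≃ G, (∀ i : I, ψ i i = Equiv.refl G) ∧
        ∀ (i j k : I) (a b : G), ψ i k (g i j k * a * b) = g' i j k * ψ i j a * ψ j k b) ↔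
      (∃ h : I → I → G, (∀ i j : I, h i j ∈ Subgroup.center G) ∧ (∀ i : I, h i i = 1) ∧
        ∀ i j k : I, g i j k * (g' i j k)⁻¹ = h i j * h j k * (h i k)⁻¹) := by
  constructor
  · rintro ⟨ψ, hψi, hψ⟩
    refine ⟨fun i j => ψ i j 1, ?_, ?_, ?_⟩
    · intro i j
      rw [Subgroup.mem_center_iff]
      intro a
      have h1 := hψ i i j a 1
      have h2 := hψ i j j 1 a
      simp [hg₁, hg₂, hg'₁, hg'₂, hψi] at h1 h2
      rw [← h1, ← h2]
    · intro i; simp [hψi]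
    · intro i j k
      have hr : ∀ a : G, ψ i k a = a * ψ i k 1 := by
        intro a
        have := hψ i i k a 1
        simpa [hg₁, hg'₁, hψi] using this
      have E := hψ i j k 1 1
      rw [mul_one, mul_one, hr (g i j k)] at E
      -- E : g i j k * ψ i k 1 = g' i j k * ψ i j 1 * ψ j k 1
      have hc : ∀ x : G, x * g' i j k = g' i j k * x :=
        Subgroup.mem_center_iff.mp (hg'Z i j k)
      have : g i j k = g' i j k * ψ i j 1 * ψ j k 1 * (ψ i k 1)⁻¹ := by
        rw [← E]; group
      rw [this]
      rw [mul_assoc (g' i j k), mul_assoc (g' i j k), ← hc, mul_assoc, mul_assoc,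
        mul_assoc]
      simp [mul_assoc]
  · rintro ⟨h, hZ, hii, heq⟩
    refine ⟨fun i j => Equiv.mulLeft (h i j), ?_, ?_⟩
    · intro i; ext a; simp [hii]
    · intro i j k a b
      simp only [Equiv.coe_mulLeft]
      have hcjk : ∀ x : G, x * h j k = h j k * x := Subgroup.mem_center_iff.mp (hZ j k)
      have hcik : ∀ x : G, x * h i k = h i k * x := Subgroup.mem_center_iff.mp (hZ i k)
      have hc' : ∀ x : G, x * g' i j k = g' i j k * x :=
        Subgroup.mem_center_iff.mp (hg'Z i j k)
      have key : h i k * g i j k = g' i j k * (h i j * h j k) := by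
        have := heq i j k
        have hg : g i j k = h i j * h j k * (h i k)⁻¹ * g' i j k := by
          rw [← this]; group
        rw [hg, ← hc', ← mul_assoc, ← mul_assoc]
        congr 1
        rw [← hcik (h i j * h j k)]
        group
      calc h i k * (g i j k * a * b) = (h i k * g i j k) * a * b := by group
        _ = g' i j k * (h i j * h j k) * a * b := by rw [key]
        _ = g' i j k * (h i j * a) * (h j k * b) := by
            calc g' i j k * (h i j * h j k) * a * b
                = g' i j k * (h i j * (h j k * a) * b) := by group
              _ = g' i j k * (h i j * (a * h j k) * b) := by rw [← hcjk a]
              _ = g' i j k * (h i j * a) * (h j k * b) := by group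

theorem stmt_2 {G : Type*} [Group G] {I : Type*}
    (g g' : I → I → I → G)
    (hgZ : ∀ i j k : I, g i j k ∈ Subgroup.center G)
    (hg'Z : ∀ i j k : I, g' i j k ∈ Subgroup.center G)
    (hg₁ : ∀ i j : I, g i i j = 1) (hg₂ : ∀ i j : I, g i j j = 1)
    (hg'₁ : ∀ i j : I, g' i i j = 1) (hg'₂ : ∀ i j : I, g' i j j = 1)
    (hgc : ∀ i j k l : I, g i j l * g j k l = g i k l * g i j k)
    (hg'c : ∀ i j k l : I, g' i j l * g' j k l = g' i k l * g' i j k) :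
    ((∃ ψ : I → I → G ≃ G, (∀ i : I, ψ i i = Equiv.refl G) ∧
        ∀ (i j k : I) (a b : G), ψ i k (g i j k * a * b) = g' i j k * ψ i j a * ψ j k b) ↔
      (∃ h : I → I → G, (∀ i j : I, h i j ∈ Subgroup.center G) ∧ (∀ i : I, h i i = 1) ∧
        ∀ i j k : I, g i j k * (g' i j k)⁻¹ = h i j * h j k * (h i k)⁻¹))
    ∧
    ((∃ ψ : I → I → G ≃ G, (∀ i : I, ψ i i = Equiv.refl G) ∧
        ∀ (i j k : I) (a b : G), ψ i k (g i j k * a * b) = ψ i j a * ψ j k b) ↔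
      (∃ h : I → I → G, (∀ i j : I, h i j ∈ Subgroup.center G) ∧ (∀ i : I, h i i = 1) ∧
        ∀ i j k : I, g i j k = h i j * h j k * (h i k)⁻¹)) := by
  constructor
  · exact cech_aux g g' hg'Z hg₁ hg₂ hg'₁ hg'₂
  · have := cech_aux g (fun _ _ _ => (1 : G)) (fun _ _ _ => Subgroup.one_mem _)
      hg₁ hg₂ (by simp) (by simp)
    simpa using this
end

section
/- Let X be a group and G a normal subgroup of X. The following are equivalent: (a) for every x ∈ X, the automorphism of G given by conjugation g ↦ x g x^{-1} is an inner automorphism of G; (b) there exists a group homomorphism r : X → G/Z(G) such that for every x ∈ X and some (equivalently, every) representative n ∈ G of the coset r(x), one has x g x^{-1} = n g n^{-1} for all g ∈ G; (c) there exists a subgroup X̃ of X such that every element of X̃ commutes with every element of G, X̃ ∩ G = Z(G), and X̃ · G = X. -/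
private lemma key_center {X : Type*} [Group X] (G : Subgroup X) (n m : G)
    (h : ∀ g ∈ G, (n : X) * g * (n : X)⁻¹ = (m : X) * g * (m : X)⁻¹) :
    (QuotientGroup.mk n : ↥G ⧸ Subgroup.center ↥G) = QuotientGroup.mk m := by
  rw [QuotientGroup.eq]
  rw [Subgroup.mem_center_iff]
  intro g
  have hg := h g g.2
  ext
  push_cast
  have : (g : X) * ((n : X)⁻¹ * m) = ((n : X)⁻¹ * m) * g := by
    calc (g : X) * ((n : X)⁻¹ * m)
        = (n : X)⁻¹ * ((n : X) * g * (n : X)⁻¹) * m := by group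
      _ = (n : X)⁻¹ * ((m : X) * g * (m : X)⁻¹) * m := by rw [hg]
      _ = ((n : X)⁻¹ * m) * g := by group
  simpa [mul_assoc] using this

theorem stmt_3 {X : Type*} [Group X] (G : Subgroup X) [G.Normal] :
    ((∀ x : X, ∃ n ∈ G, ∀ g ∈ G, x * g * x⁻¹ = n * g * n⁻¹) ↔
      (∃ r : X →* (↥G ⧸ Subgroup.center ↥G),
        ∀ x : X, ∀ n : ↥G, (QuotientGroup.mk n : ↥G ⧸ Subgroup.center ↥G) = r x →
          ∀ g ∈ G, x * g * x⁻¹ = ↑n * g * (↑n : X)⁻¹))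
    ∧
    ((∀ x : X, ∃ n ∈ G, ∀ g ∈ G, x * g * x⁻¹ = n * g * n⁻¹) ↔
      (∃ Xt : Subgroup X,
        (∀ a ∈ Xt, ∀ g ∈ G, a * g = g * a) ∧
        Xt ⊓ G = (Subgroup.center ↥G).map G.subtype ∧
        ∀ x : X, ∃ a ∈ Xt, ∃ g ∈ G, x = a * g)) := by
  constructor
  · constructor
    · intro ha
      choose n hnG hn using ha
      refine ⟨{ toFun := fun x => QuotientGroup.mk (⟨n x, hnG x⟩ : G),
                map_one' := ?_, map_mul' := ?_ }, ?_⟩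
      · show (QuotientGroup.mk (⟨n 1, hnG 1⟩ : G) : ↥G ⧸ Subgroup.center ↥G) = QuotientGroup.mk 1
        apply key_center
        intro g hg
        have := hn 1 g hg
        simpa using this.symm
      · intro x y
        apply key_center G (⟨n (x*y), hnG (x*y)⟩ : G) (⟨n x, hnG x⟩ * ⟨n y, hnG y⟩)
        intro g hg
        have h1 : (x*y) * g * (x*y)⁻¹ = n (x*y) * g * (n (x*y))⁻¹ := hn (x*y) g hg
        have h2 : y * g * y⁻¹ = n y * g * (n y)⁻¹ := hn y g hg
        have h3 : x * (n y * g * (n y)⁻¹) * x⁻¹ = n x * (n y * g * (n y)⁻¹) * (n x)⁻¹ :=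
          hn x _ (mul_mem (mul_mem (hnG y) hg) (inv_mem (hnG y)))
        have : (x*y) * g * (x*y)⁻¹ = (n x * n y) * g * (n x * n y)⁻¹ := by
          have : (x*y) * g * (x*y)⁻¹ = x * (y * g * y⁻¹) * x⁻¹ := by group
          rw [this, h2, h3]; group
        push_cast
        rw [← h1, this]
      · intro x m hm g hg
        have hx : (QuotientGroup.mk m : ↥G ⧸ Subgroup.center ↥G)
            = QuotientGroup.mk (⟨n x, hnG x⟩ : G) := hm
        rw [QuotientGroup.eq, Subgroup.mem_center_iff] at hx
        -- m⁻¹ * ⟨n x⟩ is central in G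
        set z : G := m⁻¹ * ⟨n x, hnG x⟩ with hz
        have hzc : ∀ h : G, h * z = z * h := hx
        have hnx : (⟨n x, hnG x⟩ : G) = m * z := by simp [hz]
        have hng : n x * g * (n x)⁻¹ = (m : X) * g * (m : X)⁻¹ := by
          have hzg := hzc ⟨g, hg⟩
          have hzg' : g * (z : X) = (z : X) * g := congrArg Subtype.val hzg
          have hcoe : (n x : X) = (m : X) * z := congrArg Subtype.val hnx
          rw [hcoe]
          rw [mul_inv_rev]
          calc (m : X) * z * g * ((z : X)⁻¹ * (m : X)⁻¹)
              = (m : X) * ((z : X) * g * (z : X)⁻¹) * (m : X)⁻¹ := by group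
            _ = (m : X) * g * (m : X)⁻¹ := by rw [← hzg']; group
        rw [hn x g hg, hng]
    · rintro ⟨r, hr⟩ x
      obtain ⟨n, hn⟩ := QuotientGroup.mk_surjective (r x)
      exact ⟨n, n.2, hr x n hn⟩
  · constructor
    · intro ha
      refine ⟨Subgroup.centralizer (G : Set X), ?_, ?_, ?_⟩
      · intro a haC g hg
        exact (Subgroup.mem_centralizer_iff.mp haC g hg).symm
      · ext x
        simp only [Subgroup.mem_inf, Subgroup.mem_map, Subgroup.coe_subtype,
          Subgroup.mem_centralizer_iff]
        constructor
        · rintro ⟨hc, hxG⟩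
          refine ⟨⟨x, hxG⟩, Subgroup.mem_center_iff.mpr ?_, rfl⟩
          intro g
          ext
          exact hc g g.2
        · rintro ⟨y, hy, rfl⟩
          refine ⟨?_, y.2⟩
          intro g hg
          have := Subgroup.mem_center_iff.mp hy ⟨g, hg⟩
          exact congrArg Subtype.val this
      · intro x
        obtain ⟨n, hnG, hn⟩ := ha x
        refine ⟨x * n⁻¹, ?_, n, hnG, by group⟩
        rw [Subgroup.mem_centralizer_iff]
        intro g hg
        have h1 := hn (n⁻¹ * g * n) (by
          have : n⁻¹ * g * n ∈ G := mul_mem (mul_mem (inv_mem hnG) hg) hnG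
          exact this)
        -- h1 : x * (n⁻¹ * g * n) * x⁻¹ = n * (n⁻¹ * g * n) * n⁻¹
        have h2 : x * (n⁻¹ * g * n) * x⁻¹ = g := by rw [h1]; group
        calc g * (x * n⁻¹)
            = (x * (n⁻¹ * g * n) * x⁻¹) * (x * n⁻¹) := by rw [h2]
          _ = (x * n⁻¹) * g := by group
    · rintro ⟨Xt, hcomm, _, hsurj⟩ x
      obtain ⟨a, ha, g0, hg0, rfl⟩ := hsurj x
      refine ⟨g0, hg0, ?_⟩
      intro g hg
      have hc := hcomm a ha (g0 * g * g0⁻¹) (mul_mem (mul_mem hg0 hg) (inv_mem hg0))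
      calc (a*g0) * g * (a*g0)⁻¹ = a * (g0 * g * g0⁻¹) * a⁻¹ := by group
        _ = (g0 * g * g0⁻¹) * a * a⁻¹ := by rw [hc]
        _ = g0 * g * g0⁻¹ := by group
end

section
/- Let X be a group and G a normal subgroup of X such that for every x ∈ X the conjugation automorphism g ↦ x g x^{-1} of G is an inner automorphism of G. Then Z(G) is a normal subgroup of X, and the canonical surjection π : X/Z(G) → X/G admits a group-homomorphism section σ : X/G → X/Z(G) with π ∘ σ = id. Explicitly, σ(x G) := n_x^{-1} x Z(G), where n_x ∈ G is any element satisfying x g x^{-1} = n_x g n_x^{-1} for all g ∈ G, is well defined (independent of the choices of n_x and of the coset representative x) and is a group homomorphism. -/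
theorem stmt_5 {X : Type*} [Group X] (G : Subgroup X) [G.Normal]
    (hinner : ∀ x : X, ∃ n ∈ G, ∀ g ∈ G, x * g * x⁻¹ = n * g * n⁻¹) :
    ((Subgroup.center ↥G).map G.subtype).Normal ∧
    ∀ [inst : ((Subgroup.center ↥G).map G.subtype).Normal],
      ∃ (π : X ⧸ (Subgroup.center ↥G).map G.subtype →* X ⧸ G)
        (σ : X ⧸ G →* X ⧸ (Subgroup.center ↥G).map G.subtype),
        (∀ x : X, π (QuotientGroup.mk x) = QuotientGroup.mk x) ∧
        (∀ y : X ⧸ G, π (σ y) = y) ∧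
        (∀ x n : X, n ∈ G → (∀ g ∈ G, x * g * x⁻¹ = n * g * n⁻¹) →
          σ (QuotientGroup.mk x) = QuotientGroup.mk (n⁻¹ * x)) := by
  set Z := (Subgroup.center ↥G).map G.subtype with hZdef
  have hZG : Z ≤ G := by
    rintro w ⟨g, hg, rfl⟩; exact g.2
  have memZ : ∀ w : X, w ∈ G → (∀ g ∈ G, w * g = g * w) → w ∈ Z := by
    intro w hw hc
    exact ⟨⟨w, hw⟩, Subgroup.mem_center_iff.mpr
      (fun g => Subtype.ext ((hc g g.2).symm)), rfl⟩
  have memZ' : ∀ w : X, w ∈ Z → w ∈ G ∧ ∀ g ∈ G, w * g = g * w := by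
    rintro w ⟨g, hg, rfl⟩
    refine ⟨g.2, fun h hh => ?_⟩
    have := Subgroup.mem_center_iff.mp hg ⟨h, hh⟩
    exact (congrArg Subtype.val this).symm
  have hGn : G.Normal := inferInstance
  -- centralizing property of n⁻¹ * x
  have cent : ∀ x n : X, n ∈ G → (∀ g ∈ G, x * g * x⁻¹ = n * g * n⁻¹) →
      ∀ g ∈ G, (n⁻¹ * x) * g = g * (n⁻¹ * x) := by
    intro x n hn hc g hg
    have h := hc g hg
    calc n⁻¹ * x * g = n⁻¹ * (x * g * x⁻¹) * x := by group
      _ = n⁻¹ * (n * g * n⁻¹) * x := by rw [h]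
      _ = g * (n⁻¹ * x) := by group
  -- key well-definedness lemma
  have key : ∀ x₁ x₂ n₁ n₂ : X, n₁ ∈ G → n₂ ∈ G →
      (∀ g ∈ G, x₁ * g * x₁⁻¹ = n₁ * g * n₁⁻¹) →
      (∀ g ∈ G, x₂ * g * x₂⁻¹ = n₂ * g * n₂⁻¹) →
      x₁⁻¹ * x₂ ∈ G → (n₁⁻¹ * x₁)⁻¹ * (n₂⁻¹ * x₂) ∈ Z := by
    intro x₁ x₂ n₁ n₂ hn₁ hn₂ hc₁ hc₂ hx
    refine memZ _ ?_ ?_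
    · have h1 : (n₁⁻¹ * x₁)⁻¹ * (n₂⁻¹ * x₂)
          = (x₁⁻¹ * (n₁ * n₂⁻¹) * x₁⁻¹⁻¹) * (x₁⁻¹ * x₂) := by group
      rw [h1]
      exact mul_mem (hGn.conj_mem _ (mul_mem hn₁ (inv_mem hn₂)) x₁⁻¹) hx
    · intro g hg
      have a1 : (n₁⁻¹ * x₁) * g = g * (n₁⁻¹ * x₁) := cent x₁ n₁ hn₁ hc₁ g hg
      have a2 : (n₂⁻¹ * x₂) * g = g * (n₂⁻¹ * x₂) := cent x₂ n₂ hn₂ hc₂ g hg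
      have a1' : (n₁⁻¹ * x₁)⁻¹ * g = g * (n₁⁻¹ * x₁)⁻¹ := by
        calc (n₁⁻¹ * x₁)⁻¹ * g
            = (n₁⁻¹ * x₁)⁻¹ * (g * (n₁⁻¹ * x₁)) * (n₁⁻¹ * x₁)⁻¹ := by group
          _ = (n₁⁻¹ * x₁)⁻¹ * ((n₁⁻¹ * x₁) * g) * (n₁⁻¹ * x₁)⁻¹ := by rw [a1]
          _ = g * (n₁⁻¹ * x₁)⁻¹ := by group
      calc (n₁⁻¹ * x₁)⁻¹ * (n₂⁻¹ * x₂) * g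
          = (n₁⁻¹ * x₁)⁻¹ * ((n₂⁻¹ * x₂) * g) := by group
        _ = (n₁⁻¹ * x₁)⁻¹ * g * (n₂⁻¹ * x₂) := by rw [a2]; group
        _ = g * (n₁⁻¹ * x₁)⁻¹ * (n₂⁻¹ * x₂) := by rw [a1']
        _ = g * ((n₁⁻¹ * x₁)⁻¹ * (n₂⁻¹ * x₂)) := by group
  have hnorm : Z.Normal := by
    constructor
    intro z hz x
    obtain ⟨hzG, hzc⟩ := memZ' z hz
    refine memZ _ (hGn.conj_mem z hzG x) ?_
    intro g hg
    have hg' : x⁻¹ * g * x ∈ G := by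
      have := hGn.conj_mem g hg x⁻¹
      simpa using this
    have h1 : z * (x⁻¹ * g * x) = (x⁻¹ * g * x) * z := hzc _ hg'
    calc x * z * x⁻¹ * g = x * (z * (x⁻¹ * g * x)) * x⁻¹ := by group
      _ = x * ((x⁻¹ * g * x) * z) * x⁻¹ := by rw [h1]
      _ = g * (x * z * x⁻¹) := by group
  refine ⟨hnorm, ?_⟩
  intro inst
  -- choice of inner representatives
  set n : X → X := fun x => (hinner x).choose with hn
  have hnG : ∀ x, n x ∈ G := fun x => (hinner x).choose_spec.1
  have hnc : ∀ x, ∀ g ∈ G, x * g * x⁻¹ = n x * g * (n x)⁻¹ :=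
    fun x => (hinner x).choose_spec.2
  -- the section as a homomorphism X →* X ⧸ Z
  have hmul : ∀ a b : X,
      ((QuotientGroup.mk ((n (a*b))⁻¹ * (a*b)) : X ⧸ Z))
        = QuotientGroup.mk (((n a)⁻¹ * a) * ((n b)⁻¹ * b)) := by
    intro a b
    have hcomm : ((n a)⁻¹ * a) * (n b)⁻¹ = (n b)⁻¹ * ((n a)⁻¹ * a) :=
      cent a (n a) (hnG a) (hnc a) _ (inv_mem (hnG b))
    have hrepr : ((n a)⁻¹ * a) * ((n b)⁻¹ * b) = (n a * n b)⁻¹ * (a * b) := by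
      calc ((n a)⁻¹ * a) * ((n b)⁻¹ * b)
          = (((n a)⁻¹ * a) * (n b)⁻¹) * b := by group
        _ = ((n b)⁻¹ * ((n a)⁻¹ * a)) * b := by rw [hcomm]
        _ = (n a * n b)⁻¹ * (a * b) := by group
    rw [hrepr]
    refine (QuotientGroup.eq ).mpr ?_
    refine key (a*b) (a*b) (n (a*b)) (n a * n b) (hnG _) (mul_mem (hnG a) (hnG b))
      (hnc _) ?_ (by simp [mul_assoc, one_mem])
    intro g hg
    have h1 : a * (b * g * b⁻¹) * a⁻¹ = n a * (b * g * b⁻¹) * (n a)⁻¹ :=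
      hnc a _ (by rw [hnc b g hg]; exact hGn.conj_mem _ hg _)
    calc (a * b) * g * (a * b)⁻¹ = a * (b * g * b⁻¹) * a⁻¹ := by group
      _ = n a * (b * g * b⁻¹) * (n a)⁻¹ := h1
      _ = n a * (n b * g * (n b)⁻¹) * (n a)⁻¹ := by rw [hnc b g hg]
      _ = (n a * n b) * g * (n a * n b)⁻¹ := by group
  let f : X →* X ⧸ Z := MonoidHom.mk' (fun x => QuotientGroup.mk ((n x)⁻¹ * x))
    (fun a b => by simpa using hmul a b)
  have hker : G ≤ f.ker := by
    intro g hg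
    have h1 := key g g (n g) g (hnG g) hg (hnc g) (fun h hh => rfl)
      (by simpa using one_mem G)
    have h2 : (n g)⁻¹ * g ∈ Z := by simpa using inv_mem h1
    show f g = 1
    exact (QuotientGroup.eq_one_iff _).mpr h2
  refine ⟨QuotientGroup.map Z G (MonoidHom.id X) (fun w hw => hZG hw),
    QuotientGroup.lift G f hker, ?_, ?_, ?_⟩
  · intro x; rfl
  · intro y
    refine QuotientGroup.induction_on y ?_
    intro x
    show (QuotientGroup.mk ((n x)⁻¹ * x) : X ⧸ G) = QuotientGroup.mk x
    refine (QuotientGroup.eq ).mpr ?_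
    have : ((n x)⁻¹ * x)⁻¹ * x = x⁻¹ * n x * x⁻¹⁻¹ := by group
    rw [this]
    exact hGn.conj_mem _ (hnG x) x⁻¹
  · intro x m hm hc
    show (QuotientGroup.mk ((n x)⁻¹ * x) : X ⧸ Z) = QuotientGroup.mk (m⁻¹ * x)
    exact (QuotientGroup.eq ).mpr
      (key x x (n x) m (hnG x) hm (hnc x) hc (by simpa using one_mem G))
end

section
/- Let G and X̃ be groups, and let j : Z(G) → X̃ be an injective group homomorphism whose image is contained in the center of X̃. Let Δ := {(j(z), z^{-1}) : z ∈ Z(G)} ⊆ X̃ × G. Then: Δ is a central (hence normal) subgroup of X̃ × G; writing X := (X̃ × G)/Δ, the map g ↦ [(1, g)] is an injective group homomorphism from G onto a normal subgroup of X; every element of the form [(x̃, 1)] commutes with every element of this copy of G; the quotient of X by the image of G is canonically isomorphic to X̃ / j(Z(G)); and the conjugation action of every element of X on the copy of G is an inner automorphism of G. In particular, if 1 → Z(G) → X̃ → Y → 1 is a central extension, then 1 → G → (X̃ × G)/Δ → Y → 1 is an extension of Y by G all of whose conjugation automorphisms of G are inner. -/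
theorem stmt_6 {G Xt : Type*} [Group G] [Group Xt]
    (j : ↥(Subgroup.center G) →* Xt) (hj : Function.Injective j)
    (hjc : ∀ z : ↥(Subgroup.center G), j z ∈ Subgroup.center Xt) :
    ∃ Δ : Subgroup (Xt × G),
      (Δ : Set (Xt × G)) = {p | ∃ z : ↥(Subgroup.center G), p = (j z, (↑z : G)⁻¹)} ∧
      Δ ≤ Subgroup.center (Xt × G) ∧
      Δ.Normal ∧
      j.range.Normal ∧
      ∀ [instΔ : Δ.Normal],
        ∀ ι : G →* (Xt × G) ⧸ Δ,
          (∀ g : G, ι g = QuotientGroup.mk (1, g)) →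
          Function.Injective ι ∧
          ι.range.Normal ∧
          (∀ (x : Xt) (g : G),
            Commute (QuotientGroup.mk (x, 1) : (Xt × G) ⧸ Δ) (ι g)) ∧
          (∀ [instR : ι.range.Normal] [instJ : j.range.Normal],
            ∃ e : (((Xt × G) ⧸ Δ) ⧸ ι.range) ≃* (Xt ⧸ j.range),
              ∀ (x : Xt) (g : G),
                e (QuotientGroup.mk (QuotientGroup.mk (x, g))) = QuotientGroup.mk x) ∧
          (∀ q : (Xt × G) ⧸ Δ, ∃ n : G, ∀ g : G, q * ι g * q⁻¹ = ι (n * g * n⁻¹)) := by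
  classical
  -- the homomorphism z ↦ (j z, (↑z)⁻¹)
  let φ : ↥(Subgroup.center G) →* Xt × G :=
    j.prod ((Subgroup.center G).subtype.comp (letI : CommGroup ↥(Subgroup.center G) := { (inferInstance : Group ↥(Subgroup.center G)) with mul_comm := fun a b => Subtype.ext (b.2.comm a).symm }; invMonoidHom))
  have hφ : ∀ z, φ z = (j z, (↑z : G)⁻¹) := fun z => rfl
  have hle : φ.range ≤ Subgroup.center (Xt × G) := by
    rintro p ⟨z, rfl⟩
    rw [Subgroup.mem_center_iff]
    intro a
    have h1 := (Subgroup.mem_center_iff.mp (hjc z)) a.1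
    have h2 := (Subgroup.mem_center_iff.mp
      ((Subgroup.center G).inv_mem z.2)) a.2
    exact Prod.ext h1 h2
  have hNΔ : φ.range.Normal := by
    constructor
    intro n hn g
    have h := (Subgroup.mem_center_iff.mp (hle hn)) g
    have : g * n * g⁻¹ = n := by rw [h]; group
    rwa [this]
  have hjle : j.range ≤ Subgroup.center Xt := by
    rintro x ⟨z, rfl⟩; exact hjc z
  have hNj : j.range.Normal := by
    constructor
    intro n hn g
    have h := (Subgroup.mem_center_iff.mp (hjle hn)) g
    have : g * n * g⁻¹ = n := by rw [h]; group
    rwa [this]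
  refine ⟨φ.range, ?_, hle, hNΔ, hNj, ?_⟩
  · ext p
    simp only [MonoidHom.coe_range, Set.mem_range, Set.mem_setOf_eq]
    constructor
    · rintro ⟨z, rfl⟩; exact ⟨z, rfl⟩
    · rintro ⟨z, rfl⟩; exact ⟨z, rfl⟩
  · intro instΔ ι hι
    have hmem : ∀ p : Xt × G, p ∈ φ.range ↔ ∃ z : ↥(Subgroup.center G),
        p = (j z, (↑z : G)⁻¹) := by
      intro p
      constructor
      · rintro ⟨z, rfl⟩; exact ⟨z, rfl⟩
      · rintro ⟨z, rfl⟩; exact ⟨z, rfl⟩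
    have hinj : Function.Injective ι := by
      intro a b hab
      have h1 : ι (a * b⁻¹) = 1 := by
        rw [map_mul, map_inv, hab, mul_inv_cancel]
      rw [hι] at h1
      have h2 : ((1, a * b⁻¹) : Xt × G) ∈ φ.range := by
        rwa [← QuotientGroup.eq_one_iff]
      obtain ⟨z, hz⟩ := (hmem _).mp h2
      have hz1 : j z = 1 := (Prod.mk.injEq _ _ _ _ ▸ hz).1.symm
      have : z = 1 := hj (by rw [hz1, map_one])
      have : a * b⁻¹ = 1 := by
        have := (Prod.mk.injEq _ _ _ _ ▸ hz).2
        rw [‹z = 1›] at this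
        simpa using this
      exact mul_inv_eq_one.mp this
    have hcomm : ∀ (x : Xt) (g : G),
        Commute (QuotientGroup.mk (x, 1) : (Xt × G) ⧸ φ.range) (ι g) := by
      intro x g
      rw [hι]
      show _ * _ = _ * _
      rw [← QuotientGroup.mk_mul, ← QuotientGroup.mk_mul]
      congr 1
      simp [Prod.ext_iff]
    have hranN : ι.range.Normal := by
      constructor
      intro n hn q
      obtain ⟨g, rfl⟩ := hn
      induction q using QuotientGroup.induction_on with
      | H p =>
        refine ⟨p.2 * g * p.2⁻¹, ?_⟩
        rw [hι, hι]
        show _ = (QuotientGroup.mk p * _) * (QuotientGroup.mk p)⁻¹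
        rw [← QuotientGroup.mk_inv, ← QuotientGroup.mk_mul, ← QuotientGroup.mk_mul]
        congr 1
        simp [Prod.ext_iff]
    refine ⟨hinj, hranN, hcomm, ?_, ?_⟩
    · intro instR instJ
      -- forward map
      let f₀ : Xt × G →* Xt ⧸ j.range :=
        (QuotientGroup.mk' j.range).comp (MonoidHom.fst Xt G)
      have hf₀ : φ.range ≤ f₀.ker := by
        rintro p ⟨z, rfl⟩
        show f₀ _ = 1
        show (QuotientGroup.mk (j z) : Xt ⧸ j.range) = 1
        rw [QuotientGroup.eq_one_iff]
        exact ⟨z, rfl⟩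
      let f₁ : (Xt × G) ⧸ φ.range →* Xt ⧸ j.range := QuotientGroup.lift _ f₀ hf₀
      have hf₁ : ι.range ≤ f₁.ker := by
        rintro q ⟨g, rfl⟩
        show f₁ (ι g) = 1
        rw [hι]
        show f₀ (1, g) = 1
        simp [f₀]
      let f₂ : (((Xt × G) ⧸ φ.range) ⧸ ι.range) →* Xt ⧸ j.range :=
        QuotientGroup.lift _ f₁ hf₁
      -- backward map
      let h₀ : Xt →* (((Xt × G) ⧸ φ.range) ⧸ ι.range) :=
        (QuotientGroup.mk' ι.range).comp
          ((QuotientGroup.mk' φ.range).comp (MonoidHom.inl Xt G))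
      have hh₀ : j.range ≤ h₀.ker := by
        rintro x ⟨z, rfl⟩
        show (QuotientGroup.mk (QuotientGroup.mk ((j z, 1) : Xt × G)) :
          ((Xt × G) ⧸ φ.range) ⧸ ι.range) = 1
        rw [QuotientGroup.eq_one_iff]
        refine ⟨(↑z : G), ?_⟩
        rw [hι, QuotientGroup.eq]
        exact ⟨z, by simp [φ, Prod.ext_iff]⟩
      let h₂ : Xt ⧸ j.range →* (((Xt × G) ⧸ φ.range) ⧸ ι.range) :=
        QuotientGroup.lift _ h₀ hh₀
      have key : ∀ (x : Xt) (g : G),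
          (QuotientGroup.mk (QuotientGroup.mk (x, g)) :
            (((Xt × G) ⧸ φ.range) ⧸ ι.range)) =
          QuotientGroup.mk (QuotientGroup.mk (x, 1)) := by
        intro x g
        rw [QuotientGroup.eq]
        refine ⟨g⁻¹, ?_⟩
        rw [hι, ← QuotientGroup.mk_inv, ← QuotientGroup.mk_mul]
        congr 1
        simp [Prod.ext_iff]
      have hleft : ∀ q, h₂ (f₂ q) = q := by
        intro q
        induction q using QuotientGroup.induction_on with
        | H q' =>
          induction q' using QuotientGroup.induction_on with
          | H p =>
            obtain ⟨x, g⟩ := p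
            show h₂ (f₀ (x, g)) = _
            show (QuotientGroup.mk (QuotientGroup.mk (x, 1)) :
              (((Xt × G) ⧸ φ.range) ⧸ ι.range)) = _
            exact (key x g).symm
      have hright : ∀ y, f₂ (h₂ y) = y := by
        intro y
        induction y using QuotientGroup.induction_on with
        | H x => rfl
      refine ⟨MulEquiv.mk ⟨f₂, h₂, hleft, hright⟩ (map_mul f₂), ?_⟩
      intro x g
      rfl
    · intro q
      induction q using QuotientGroup.induction_on with
      | H p =>
        refine ⟨p.2, fun g => ?_⟩
        rw [hι, hι]
        show QuotientGroup.mk p * _ * (QuotientGroup.mk p)⁻¹ = _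
        rw [← QuotientGroup.mk_inv, ← QuotientGroup.mk_mul, ← QuotientGroup.mk_mul]
        congr 1
        simp [Prod.ext_iff]
end
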